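/- arXiv:1910.13958 — 2 statements merged into one kernel-verified Lean document; each statement's English description precedes it below -/
import Mathlib

section
/- Let a > b > 0 be real numbers and m a natural number. Then the sum over u from 0 to m of (a + b*u)^{-2} * (a + b*(m-u))^{-2} is at most 8 / (b * (a - b) * (a + b*m)^2). -/
theorem stmt0 (a b : ℝ) (hb : 0 < b) (hab : b < a) (m : ℕ) :
    ∑ u ∈ Finset.range (m + 1),
      ((a + b * u) ^ 2)⁻¹ * ((a + b * ((m - u : ℕ) : ℝ)) ^ 2)⁻¹
      ≤ 8 / (b * (a - b) * (a + b * m) ^ 2) := by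
  have ha : 0 < a := hb.trans hab
  have hx : ∀ u : ℕ, 0 < a + b * u := fun u => by positivity
  set S : ℝ := 2 * a + b * m with hS
  have hSpos : 0 < S := by positivity
  set g : ℕ → ℝ := fun u => ((a + b * u) ^ 2)⁻¹ with hg
  -- pointwise bound
  have key : ∀ u ∈ Finset.range (m + 1),
      ((a + b * u) ^ 2)⁻¹ * ((a + b * ((m - u : ℕ) : ℝ)) ^ 2)⁻¹
      ≤ 2 / S ^ 2 * (g u + g (m - u)) := by
    intro u hu
    have hum : u ≤ m := Nat.lt_succ_iff.mp (Finset.mem_range.mp hu)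
    have hcast : ((m - u : ℕ) : ℝ) = (m : ℝ) - u := by
      push_cast [hum]; ring
    set x := a + b * (u : ℝ) with hxdef
    set y := a + b * ((m - u : ℕ) : ℝ) with hydef
    have hxpos : 0 < x := hx u
    have hypos : 0 < y := hx (m - u)
    have hxy : x + y = S := by
      rw [hxdef, hydef, hcast, hS]; ring
    have h1 : S ^ 2 ≤ 2 * (x ^ 2 + y ^ 2) := by nlinarith [sq_nonneg (x - y)]
    have hgu : g u = (x ^ 2)⁻¹ := rfl
    have hgv : g (m - u) = (y ^ 2)⁻¹ := rfl
    rw [hgu, hgv]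
    have e1 : (x ^ 2)⁻¹ * (y ^ 2)⁻¹ = S ^ 2 / (S ^ 2 * x ^ 2 * y ^ 2) := by
      field_simp
    have e2 : 2 / S ^ 2 * ((x ^ 2)⁻¹ + (y ^ 2)⁻¹)
        = 2 * (x ^ 2 + y ^ 2) / (S ^ 2 * x ^ 2 * y ^ 2) := by
      field_simp; ring
    rw [e1, e2]
    apply div_le_div_of_nonneg_right h1 (by positivity)
  have step1 : ∑ u ∈ Finset.range (m + 1),
      ((a + b * u) ^ 2)⁻¹ * ((a + b * ((m - u : ℕ) : ℝ)) ^ 2)⁻¹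
      ≤ 4 / S ^ 2 * ∑ u ∈ Finset.range (m + 1), g u := by
    calc ∑ u ∈ Finset.range (m + 1),
        ((a + b * u) ^ 2)⁻¹ * ((a + b * ((m - u : ℕ) : ℝ)) ^ 2)⁻¹
        ≤ ∑ u ∈ Finset.range (m + 1), 2 / S ^ 2 * (g u + g (m - u)) :=
          Finset.sum_le_sum key
      _ = 2 / S ^ 2 * (∑ u ∈ Finset.range (m + 1), g u
            + ∑ u ∈ Finset.range (m + 1), g (m - u)) := by
          rw [← Finset.sum_add_distrib, Finset.mul_sum]
      _ = 4 / S ^ 2 * ∑ u ∈ Finset.range (m + 1), g u := by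
          have : ∑ u ∈ Finset.range (m + 1), g (m - u)
              = ∑ u ∈ Finset.range (m + 1), g u := by
            have := Finset.sum_range_reflect g (m + 1)
            simpa using this
          rw [this]; ring
  -- telescoping bound on the sum of g
  have hT : ∑ u ∈ Finset.range (m + 1), g u ≤ (a ^ 2)⁻¹ + (a * b)⁻¹ := by
    rw [Finset.sum_range_succ']
    have htel : ∑ i ∈ Finset.range m, g (i + 1)
        ≤ ∑ i ∈ Finset.range m,
          (b⁻¹ * (a + b * i)⁻¹ - b⁻¹ * (a + b * (i + 1 : ℕ))⁻¹) := by
      apply Finset.sum_le_sum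
      intro i _
      have h1 : 0 < a + b * (i : ℝ) := hx i
      have h2 : 0 < a + b * ((i : ℝ) + 1) := by positivity
      have hcast : ((i + 1 : ℕ) : ℝ) = (i : ℝ) + 1 := by push_cast; ring
      rw [hg]
      simp only [hcast]
      rw [show b⁻¹ * (a + b * i)⁻¹ - b⁻¹ * (a + b * ((i : ℝ) + 1))⁻¹
          = ((a + b * i) * (a + b * ((i : ℝ) + 1)))⁻¹ by
        field_simp; ring]
      rw [inv_le_inv₀ (by positivity) (by positivity)]
      nlinarith
    have hsum : ∑ i ∈ Finset.range m,
        (b⁻¹ * (a + b * i)⁻¹ - b⁻¹ * (a + b * (i + 1 : ℕ))⁻¹)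
        = b⁻¹ * (a + b * (0 : ℕ))⁻¹ - b⁻¹ * (a + b * m)⁻¹ := by
      exact Finset.sum_range_sub' (fun i => b⁻¹ * (a + b * (i : ℕ))⁻¹) m
    have hg0 : g 0 = (a ^ 2)⁻¹ := by simp [hg]
    have hMpos : 0 < a + b * m := hx m
    have : b⁻¹ * (a + b * (0 : ℕ))⁻¹ - b⁻¹ * (a + b * m)⁻¹ ≤ (a * b)⁻¹ := by
      simp only [Nat.cast_zero, mul_zero, add_zero]
      have h1 : 0 ≤ b⁻¹ * (a + b * m)⁻¹ := by positivity
      have h2 : b⁻¹ * a⁻¹ = (a * b)⁻¹ := by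
        rw [mul_inv]; ring
      linarith [h2 ▸ (sub_le_self (b⁻¹ * a⁻¹) h1)]
    rw [hg0]
    rw [hsum] at htel
    linarith
  -- combine
  have hM : 0 < a + b * m := hx m
  have hSM : a + b * m ≤ S := by rw [hS]; linarith
  have hTnn : (0:ℝ) ≤ (a ^ 2)⁻¹ + (a * b)⁻¹ := by positivity
  have step2 : 4 / S ^ 2 * ∑ u ∈ Finset.range (m + 1), g u
      ≤ 4 / (a + b * m) ^ 2 * ((a ^ 2)⁻¹ + (a * b)⁻¹) := by
    have h1 : 4 / S ^ 2 * ∑ u ∈ Finset.range (m + 1), g u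
        ≤ 4 / S ^ 2 * ((a ^ 2)⁻¹ + (a * b)⁻¹) := by
      apply mul_le_mul_of_nonneg_left hT (by positivity)
    have h2 : 4 / S ^ 2 ≤ 4 / (a + b * m) ^ 2 := by
      apply div_le_div_of_nonneg_left (by norm_num) (by positivity)
      nlinarith
    calc 4 / S ^ 2 * ∑ u ∈ Finset.range (m + 1), g u
        ≤ 4 / S ^ 2 * ((a ^ 2)⁻¹ + (a * b)⁻¹) := h1
      _ ≤ 4 / (a + b * m) ^ 2 * ((a ^ 2)⁻¹ + (a * b)⁻¹) :=
          mul_le_mul_of_nonneg_right h2 hTnn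
  have step3 : 4 / (a + b * m) ^ 2 * ((a ^ 2)⁻¹ + (a * b)⁻¹)
      ≤ 8 / (b * (a - b) * (a + b * m) ^ 2) := by
    have hab' : 0 < a - b := by linarith
    have h4 : 4 * ((a ^ 2)⁻¹ + (a * b)⁻¹) ≤ 8 / (b * (a - b)) := by
      have e : 4 * ((a ^ 2)⁻¹ + (a * b)⁻¹) = 4 * (a + b) / (a ^ 2 * b) := by
        field_simp; ring
      rw [e, div_le_div_iff₀ (by positivity) (by positivity)]
      nlinarith [mul_nonneg hb.le (add_nonneg (sq_nonneg a) (sq_nonneg b))]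
    calc 4 / (a + b * m) ^ 2 * ((a ^ 2)⁻¹ + (a * b)⁻¹)
        = (4 * ((a ^ 2)⁻¹ + (a * b)⁻¹)) / (a + b * m) ^ 2 := by ring
      _ ≤ (8 / (b * (a - b))) / (a + b * m) ^ 2 := by gcongr
      _ = 8 / (b * (a - b) * (a + b * m) ^ 2) := by rw [div_div]
  linarith [step1, step2, step3]
end

section
/- Let μ be a probability distribution on ℕ with mean d and exponential tail P(D ≥ (1+a)d) ≤ e^{-c₁ a d} for all a ≥ 1 (some c₁ > 0). Let μ^♯ be the augmented distribution of μ with parameter ε ∈ (0,1). Then there exists d₀(ε, c₁) such that for d ≥ d₀, the mean d^♯ of μ^♯ satisfies d^♯ ≤ (1 + ε/9) d. -/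
lemma aux_mul_exp (c x : ℝ) (hc : 0 < c) (hx : 0 ≤ x) : x * Real.exp (-(c*x)) ≤ 1/c := by
  have h1 : c * x ≤ Real.exp (c*x) := by nlinarith [Real.add_one_le_exp (c*x)]
  have h2 : Real.exp (c*x) * Real.exp (-(c*x)) = 1 := by
    rw [← Real.exp_add]; simp
  have h3 : (0:ℝ) < Real.exp (-(c*x)) := Real.exp_pos _
  rw [le_div_iff₀ hc]
  nlinarith

lemma aux_exp_le (c x : ℝ) (hc : 0 < c) (hx : 0 < x) : Real.exp (-(c*x)) ≤ 1/(c*x) := by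
  have h1 : c * x ≤ Real.exp (c*x) := by nlinarith [Real.add_one_le_exp (c*x)]
  have h2 : Real.exp (c*x) * Real.exp (-(c*x)) = 1 := by
    rw [← Real.exp_add]; simp
  have h3 : (0:ℝ) < Real.exp (-(c*x)) := Real.exp_pos _
  rw [le_div_iff₀ (by positivity)]
  nlinarith

lemma aux_le_sqrt (x : ℝ) (h0 : 0 ≤ x) (h1 : x ≤ 1) : x ≤ Real.sqrt x := by
  nlinarith [Real.sq_sqrt h0, Real.sqrt_nonneg x, sq_nonneg (Real.sqrt x - 1)]

lemma aux_sqrt_exp (z : ℝ) : Real.sqrt (Real.exp z) = Real.exp (z/2) := by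
  rw [show Real.exp z = Real.exp (z/2) ^ 2 by rw [sq, ← Real.exp_add]; ring_nf]
  exact Real.sqrt_sq (Real.exp_pos _).le

lemma case1_arith (ε d N Z T : ℝ) (hε0 : 0 < ε) (hε1 : ε < 1)
    (hd_pos : 0 < d) (h10 : 10 ≤ (1-ε)*d) (hT0 : 0 ≤ T) (hT : T < ε/10)
    (hN0 : 0 ≤ N) (hN : N ≤ (1-ε/10)*d + T) (hZlb : (1-ε/10)*(1-T) ≤ Z) :
    N / Z ≤ (1+ε/9)*d := by
  have hZpos : 0 < Z := lt_of_lt_of_le (by nlinarith) hZlb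
  have hstep : N / Z ≤ ((1-ε/10)*d + ε/10)/((1-ε/10)*(1-ε/10)) := by
    apply div_le_div₀ (by nlinarith) (by nlinarith) (by nlinarith)
    apply le_trans _ hZlb
    nlinarith
  apply le_trans hstep
  rw [div_le_iff₀ (by nlinarith)]
  nlinarith [mul_nonneg (mul_nonneg hε0.le (by linarith : (0:ℝ) ≤ 1 - ε/10))
      (by linarith : (0:ℝ) ≤ (1-ε)*d - 10),
    mul_nonneg hε0.le (by linarith : (0:ℝ) ≤ 1 - ε)]

lemma case2A_arith (ε d S₀ S₁ t k : ℝ) (hε0 : 0 < ε) (hε1 : ε < 1)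
    (hd_pos : 0 < d) (hS₀ : 0 ≤ S₀) (ht : 0 < t) (hk0 : 0 ≤ k)
    (hS₁k : S₁ ≤ k*S₀) (hk : k ≤ (1+ε/10)*d) :
    ((1-ε/10)*S₁ + k*t)/((1-ε/10)*S₀ + t) ≤ (1+ε/9)*d := by
  have hZp : 0 < (1-ε/10)*S₀+t := by nlinarith
  rw [div_le_iff₀ hZp]
  have h1 : (1-ε/10)*S₁ + k*t ≤ k*((1-ε/10)*S₀+t) := by nlinarith
  have h2 : k*((1-ε/10)*S₀+t) ≤ (1+ε/9)*d*((1-ε/10)*S₀+t) := by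
    apply mul_le_mul_of_nonneg_right _ hZp.le
    nlinarith
  linarith

lemma case2B_final (ε d A B v icε : ℝ) (hε0 : 0 < ε) (hε1 : ε < 1)
    (hd1 : 1 ≤ d) (hv0 : 0 ≤ v) (hdv : d * v = icε) (hicε : 0 ≤ icε)
    (hAd : A + 4 * icε ≤ ε*d/10) (hBA : B ≤ A) :
    (1-ε/10)*d + B ≤ (1+ε/9)*d*((1-ε/10)*(1-v)) := by
  have hεcoef : ε/10 ≤ (ε/9) * (1 - ε/10) := by nlinarith
  have hd_pos : (0:ℝ) < d := by linarith
  have hterm : (1 + ε/9) * (1 - ε/10) * (d * v) ≤ 2 * icε := by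
    rw [hdv]
    nlinarith [mul_nonneg hicε (by nlinarith : (0:ℝ) ≤ 2 - (1+ε/9)*(1-ε/10))]
  have hmain : (1 - ε/10) * d + (ε/10) * d ≤ (1 + ε/9) * (1 - ε/10) * d := by
    nlinarith [mul_le_mul_of_nonneg_right hεcoef hd_pos.le]
  nlinarith [hterm, hmain]

lemma case2B_arith (ε cε d S₀ S₁ t w A u : ℝ) (hε0 : 0 < ε) (hε1 : ε < 1)
    (hcε : 0 < cε) (hd1 : 1 ≤ d) (hS₁0 : 0 ≤ S₁) (hS₁le : S₁ ≤ d)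
    (hS₀val : S₀ = 1 - u) (hu : u ≤ 1/(cε*d)) (hu0 : 0 ≤ u) (ht0 : 0 ≤ t)
    (hw0 : 0 ≤ w) (hw : w ≤ A/d) (hA0 : 0 < A) (hcεd : 40 ≤ cε*d)
    (hAd : A + 4/cε ≤ ε*d/10) :
    ((1-ε/10)*S₁ + w)/((1-ε/10)*S₀ + t) ≤ (1+ε/9)*d := by
  have hd_pos : (0:ℝ) < d := by linarith
  have hu40 : u ≤ 1/40 := by
    apply le_trans hu
    rw [div_le_div_iff₀ (by linarith) (by norm_num)]
    linarith
  have hden_pos : 0 < (1-ε/10)*(1 - 1/(cε*d)) := by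
    have h40 : 1/(cε*d) ≤ 1/40 := by
      rw [div_le_div_iff₀ (by linarith) (by norm_num)]
      linarith
    nlinarith
  have hden_lb : (1-ε/10)*(1 - 1/(cε*d)) ≤ (1-ε/10)*S₀ + t := by
    rw [hS₀val]
    nlinarith
  have hnum_ub : (1-ε/10)*S₁ + w ≤ (1-ε/10)*d + A/d := by nlinarith
  have hstep : ((1-ε/10)*S₁ + w)/((1-ε/10)*S₀ + t) ≤
      ((1-ε/10)*d + A/d)/((1-ε/10)*(1 - 1/(cε*d))) := by
    apply div_le_div₀ _ hnum_ub hden_pos hden_lb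
    have : 0 < A/d := by positivity
    nlinarith
  apply le_trans hstep
  rw [div_le_iff₀ hden_pos]
  apply case2B_final ε d A (A/d) (1/(cε*d)) (1/cε) hε0 hε1 hd1 (by positivity)
    (by field_simp) (by positivity) _ (div_le_self hA0.le hd1)
  have h4 : (4:ℝ) * (1/cε) = 4/cε := by ring
  linarith

lemma aux_B1 (kk t d E c : ℝ) (hc : 0 < c) (hd : 0 < d) (ht0 : 0 ≤ t)
    (hk0 : 0 ≤ kk) (hk2 : kk ≤ 2*d) (ht : t ≤ E*E) (hE0 : 0 ≤ E)
    (hdE : d*E ≤ 4/c) : kk*t*d ≤ 32/c^2 := by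
  have h1 : kk*t*d ≤ 2*((d*E)*(d*E)) := by
    nlinarith [mul_nonneg (mul_nonneg ht0 hd.le) (by linarith : (0:ℝ) ≤ 2*d - kk),
      mul_nonneg (mul_nonneg hd.le hd.le) (by linarith : (0:ℝ) ≤ E*E - t)]
  have h2 : (d*E)*(d*E) ≤ (4/c)*(4/c) :=
    mul_le_mul hdE hdE (by positivity) (by positivity)
  have h3 : 2*((4:ℝ)/c*(4/c)) = 32/c^2 := by ring
  linarith

lemma aux_B2 (kk t d E1 E2 c : ℝ) (hc : 0 < c) (hd0 : 0 ≤ d) (ht0 : 0 ≤ t)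
    (hk0 : 0 ≤ kk) (ht : t ≤ E1*E1) (hE1 : 0 ≤ E1) (hkE : kk*E1 ≤ 8/c)
    (hE12 : E1 ≤ E2) (hE20 : 0 ≤ E2) (hdE2 : d*E2 ≤ 4/c) :
    kk*t*d ≤ 32/c^2 := by
  have h1 : kk*t*d ≤ (kk*E1)*(d*E1) := by
    nlinarith [mul_nonneg (mul_nonneg hk0 hd0) (by linarith : (0:ℝ) ≤ E1*E1 - t)]
  have h2 : (kk*E1)*(d*E1) ≤ (kk*E1)*(d*E2) := by
    apply mul_le_mul_of_nonneg_left _ (mul_nonneg hk0 hE1)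
    exact mul_le_mul_of_nonneg_left hE12 hd0
  have h3 : (kk*E1)*(d*E2) ≤ (8/c)*(4/c) :=
    mul_le_mul hkE hdE2 (mul_nonneg hd0 hE20) (by positivity)
  have h4 : (8:ℝ)/c*(4/c) = 32/c^2 := by ring
  linarith

set_option maxHeartbeats 3200000 in
/-- First-moment bound for the augmented distribution `μ♯`: if `μ = (p k)` has mean `d`,
an exponential tail, and concentration at level `ε/10`, then the mean of the augmented
distribution `q = μ♯` (defined via the cutoff `k₀`, in either of the two cases
`k₀ < k_max` or `k₀ = k_max`) is at most `(1 + ε/9) d`, for all `d` large enough. -/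
theorem stmt14 (c₁ cε : ℝ) (hc₁ : 0 < c₁) (hcε : 0 < cε)
    (ε : ℝ) (hε : ε ∈ Set.Ioo (0 : ℝ) 1) :
    ∃ d₀ : ℝ, 0 < d₀ ∧ ∀ d : ℝ, d₀ ≤ d →
      ∀ (p q : ℕ → ℝ) (k₀ : ℕ) (Z : ℝ),
        (∀ k, 0 ≤ p k) →
        (∑' k : ℕ, p k = 1) →
        (∑' k : ℕ, (k : ℝ) * p k = d) →
        -- exponential tail of μ
        (∀ a : ℝ, 1 ≤ a →
          ∑' k : ℕ, (if (1 + a) * d ≤ (k : ℝ) then p k else 0) ≤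
            Real.exp (-(c₁ * a * d))) →
        -- concentration of μ at level ε/10
        (∑' k : ℕ, (if (1 + ε / 10) * d ≤ (k : ℝ) then p k else 0) ≤
          Real.exp (-(cε * d))) →
        -- characterization of k₀ = max{k : ∑_{j ≥ k} j √(p j) ≥ ε/10}
        (ε / 10 ≤ ∑' j : ℕ, (if k₀ ≤ j then (j : ℝ) * Real.sqrt (p j) else 0)) →
        (∀ k : ℕ, k₀ < k →
          ∑' j : ℕ, (if k ≤ j then (j : ℝ) * Real.sqrt (p j) else 0) < ε / 10) →
        -- the two-case definition of the augmented distribution q = μ♯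
        (((∃ k, k₀ < k ∧ 0 < p k) ∧
            Z = (∑' k : ℕ, if k ≤ k₀ then (1 - ε / 10) * p k else Real.sqrt (p k)) ∧
            ∀ k, q k = (if k ≤ k₀ then (1 - ε / 10) * p k else Real.sqrt (p k)) / Z)
          ∨ ((∀ k, 0 < p k → k ≤ k₀) ∧ 0 < p k₀ ∧
            Z = (∑' k : ℕ, if k < k₀ then (1 - ε / 10) * p k else 0) + Real.sqrt (p k₀) ∧
            ∀ k, q k = (if k < k₀ then (1 - ε / 10) * p k
              else if k = k₀ then Real.sqrt (p k₀) else 0) / Z)) →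
        ∑' k : ℕ, (k : ℝ) * q k ≤ (1 + ε / 9) * d := by
  obtain ⟨hε0, hε1⟩ := hε
  have h1ε : 0 < 1 - ε := by linarith
  refine ⟨10/(1-ε) + 1 + (10/ε)*((32/cε^2 + 32/c₁^2) + 4/cε), by positivity, ?_⟩
  intro d hd p q k₀ Z hp hp1 hpd htail hconc hk₀lb hk₀ub hcase
  have hApos : (0:ℝ) < 32/cε^2 + 32/c₁^2 := by positivity
  have hd1 : (1:ℝ) ≤ d := by
    have h1 : (0:ℝ) < 10/(1-ε) := by positivity
    have h2 : (0:ℝ) < (10/ε)*((32/cε^2 + 32/c₁^2) + 4/cε) := by positivity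
    linarith
  have hd_pos : (0:ℝ) < d := by linarith
  have h10 : (10:ℝ) ≤ (1-ε)*d := by
    have h2 : (0:ℝ) < (10/ε)*((32/cε^2 + 32/c₁^2) + 4/cε) := by positivity
    have h3 : 10/(1-ε) ≤ d := by linarith
    have h3' := (div_le_iff₀ h1ε).mp h3
    linarith
  have hAd : (32/cε^2 + 32/c₁^2) + 4/cε ≤ ε*d/10 := by
    have h1 : (0:ℝ) < 10/(1-ε) := by positivity
    have h3 : (10/ε)*((32/cε^2 + 32/c₁^2) + 4/cε) ≤ d := by linarith
    have h4 := mul_le_mul_of_nonneg_left h3 hε0.le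
    have h5 : ε * ((10/ε)*((32/cε^2 + 32/c₁^2) + 4/cε)) =
        10 * ((32/cε^2 + 32/c₁^2) + 4/cε) := by field_simp
    rw [h5] at h4
    linarith
  -- basic summability facts
  have hp_sum : Summable p := by
    by_contra h
    rw [tsum_eq_zero_of_not_summable h] at hp1
    norm_num at hp1
  have hkp_sum : Summable (fun k : ℕ => (k : ℝ) * p k) := by
    by_contra h
    rw [tsum_eq_zero_of_not_summable h] at hpd
    linarith
  have hp_le1 : ∀ k, p k ≤ 1 := by
    intro k
    rw [← hp1]
    exact Summable.le_tsum hp_sum k (fun j _ => hp j)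
  have hp_le_sqrt : ∀ k, p k ≤ Real.sqrt (p k) := fun k =>
    aux_le_sqrt _ (hp k) (hp_le1 k)
  rcases hcase with ⟨-, hZ, hq⟩ | ⟨hsupp, hpk₀, hZ, hq⟩
  · -- Case 1 : k₀ < k_max
    have hg_nonneg : ∀ k : ℕ,
        0 ≤ (if k ≤ k₀ then (1 - ε/10) * p k else Real.sqrt (p k)) := by
      intro k
      split_ifs
      · have : (0:ℝ) ≤ 1 - ε/10 := by linarith
        exact mul_nonneg this (hp k)
      · exact Real.sqrt_nonneg _
    have hgoal_eq : ∑' k : ℕ, (k : ℝ) * q k =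
        (∑' k : ℕ, (k : ℝ) * (if k ≤ k₀ then (1 - ε/10) * p k else Real.sqrt (p k))) / Z := by
      rw [← tsum_div_const]
      exact tsum_congr fun k => by rw [hq k, mul_div_assoc]
    by_cases hgs : Summable (fun k : ℕ =>
        (k : ℝ) * (if k ≤ k₀ then (1 - ε/10) * p k else Real.sqrt (p k)))
    · -- good branch
      have hg_sum : Summable (fun k : ℕ =>
          (if k ≤ k₀ then (1 - ε/10) * p k else Real.sqrt (p k))) := by
        have h2 : Summable (fun k : ℕ => if k = 0 then (0:ℝ) else
            (if k ≤ k₀ then (1 - ε/10) * p k else Real.sqrt (p k))) := by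
          apply hgs.of_nonneg_of_le
          · intro k
            by_cases h : k = 0
            · rw [if_pos h]
            · rw [if_neg h]
              exact hg_nonneg k
          · intro k
            by_cases h : k = 0
            · subst h; simp
            · rw [if_neg h]
              have h1 : (1:ℝ) ≤ (k:ℝ) := by
                have : 1 ≤ k := Nat.one_le_iff_ne_zero.2 h
                exact_mod_cast this
              exact le_mul_of_one_le_left (hg_nonneg k) h1
        have h1 : Summable (fun k : ℕ => if k = 0 then
            (if (0:ℕ) ≤ k₀ then (1 - ε/10) * p 0 else Real.sqrt (p 0)) else (0:ℝ)) :=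
          ⟨_, hasSum_ite_eq 0 _⟩
        apply (h1.add h2).congr
        intro k
        by_cases hk : k = 0 <;> simp [hk]
      -- tail sum T
      have hT_sum : Summable (fun j : ℕ =>
          if k₀ + 1 ≤ j then (j : ℝ) * Real.sqrt (p j) else 0) := by
        apply hgs.of_nonneg_of_le
        · intro j
          by_cases h : k₀ + 1 ≤ j
          · rw [if_pos h]
            exact mul_nonneg (Nat.cast_nonneg j) (Real.sqrt_nonneg _)
          · rw [if_neg h]
        · intro j
          by_cases h : k₀ + 1 ≤ j
          · have h2 : ¬ j ≤ k₀ := by omega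
            rw [if_pos h, if_neg h2]
          · rw [if_neg h]
            exact mul_nonneg (Nat.cast_nonneg j) (hg_nonneg j)
      have hT_lt : (∑' j : ℕ, if k₀ + 1 ≤ j then (j : ℝ) * Real.sqrt (p j) else 0) < ε/10 :=
        hk₀ub (k₀ + 1) (Nat.lt_succ_self k₀)
      have hT_nonneg : 0 ≤ ∑' j : ℕ, (if k₀ + 1 ≤ j then (j : ℝ) * Real.sqrt (p j) else 0) :=
        tsum_nonneg fun j => by
          split_ifs
          · exact mul_nonneg (Nat.cast_nonneg j) (Real.sqrt_nonneg _)
          · exact le_rfl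
      -- numerator bound
      have hN : (∑' k : ℕ, (k : ℝ) * (if k ≤ k₀ then (1 - ε/10) * p k else Real.sqrt (p k)))
          ≤ (1 - ε/10) * d + ∑' j : ℕ, (if k₀ + 1 ≤ j then (j : ℝ) * Real.sqrt (p j) else 0) := by
        have hle : ∀ k : ℕ, (k : ℝ) * (if k ≤ k₀ then (1 - ε/10) * p k else Real.sqrt (p k))
            ≤ (1 - ε/10) * ((k : ℝ) * p k) +
              (if k₀ + 1 ≤ k then (k : ℝ) * Real.sqrt (p k) else 0) := by
          intro k
          by_cases h : k ≤ k₀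
          · have h2 : ¬ k₀ + 1 ≤ k := by omega
            simp only [if_pos h, if_neg h2]
            exact le_of_eq (by ring)
          · have h2 : k₀ + 1 ≤ k := by omega
            simp only [if_neg h, if_pos h2]
            have h3 : 0 ≤ (1 - ε/10) * ((k : ℝ) * p k) := by
              apply mul_nonneg (by linarith)
              exact mul_nonneg (Nat.cast_nonneg k) (hp k)
            linarith
        calc (∑' k : ℕ, (k : ℝ) * (if k ≤ k₀ then (1 - ε/10) * p k else Real.sqrt (p k)))
            ≤ ∑' k : ℕ, ((1 - ε/10) * ((k : ℝ) * p k) +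
              (if k₀ + 1 ≤ k then (k : ℝ) * Real.sqrt (p k) else 0)) :=
              hgs.tsum_le_tsum hle ((hkp_sum.mul_left _).add hT_sum)
          _ = (1 - ε/10) * d + ∑' j : ℕ, (if k₀ + 1 ≤ j then (j : ℝ) * Real.sqrt (p j) else 0) := by
              rw [Summable.tsum_add (hkp_sum.mul_left _) hT_sum, tsum_mul_left, hpd]
      -- Z lower bound
      have hZlb : (1 - ε/10) * (1 - ∑' j : ℕ, (if k₀ + 1 ≤ j then (j : ℝ) * Real.sqrt (p j) else 0))
          ≤ Z := by
        rw [hZ]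
        have hle : ∀ k : ℕ, (1 - ε/10) * (p k -
            (if k₀ + 1 ≤ k then (k : ℝ) * Real.sqrt (p k) else 0))
            ≤ (if k ≤ k₀ then (1 - ε/10) * p k else Real.sqrt (p k)) := by
          intro k
          by_cases h : k ≤ k₀
          · have h2 : ¬ k₀ + 1 ≤ k := by omega
            simp only [if_pos h, if_neg h2]
            exact le_of_eq (by ring)
          · have h2 : k₀ + 1 ≤ k := by omega
            simp only [if_neg h, if_pos h2]
            have h1k : (1:ℝ) ≤ (k:ℝ) := by
              have : 1 ≤ k := by omega
              exact_mod_cast this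
            have hs0 : 0 ≤ Real.sqrt (p k) := Real.sqrt_nonneg _
            have h7 : Real.sqrt (p k) ≤ (k:ℝ) * Real.sqrt (p k) :=
              le_mul_of_one_le_left hs0 h1k
            have h8 : p k - (k:ℝ) * Real.sqrt (p k) ≤ 0 := by
              linarith [hp_le_sqrt k]
            have h9 : (1 - ε/10) * (p k - (k:ℝ) * Real.sqrt (p k)) ≤ (1 - ε/10) * 0 :=
              mul_le_mul_of_nonneg_left h8 (by linarith)
            rw [mul_zero] at h9
            linarith
        have h := ((hp_sum.sub hT_sum).mul_left _).tsum_le_tsum hle hg_sum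
        rwa [tsum_mul_left, Summable.tsum_sub hp_sum hT_sum, hp1] at h
      have hNnn : 0 ≤ ∑' k : ℕ, (k : ℝ) *
          (if k ≤ k₀ then (1 - ε/10) * p k else Real.sqrt (p k)) :=
        tsum_nonneg fun k => mul_nonneg (Nat.cast_nonneg k) (hg_nonneg k)
      rw [hgoal_eq]
      exact case1_arith ε d _ Z _ hε0 hε1 hd_pos h10 hT_nonneg hT_lt hNnn hN hZlb
    · rw [hgoal_eq, tsum_eq_zero_of_not_summable hgs, zero_div]
      positivity
  · -- Case 2 : k₀ = k_max
    have hδ : (0:ℝ) < 1 - ε/10 := by linarith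
    have ht_pos : 0 < Real.sqrt (p k₀) := Real.sqrt_pos.2 hpk₀
    have ht0 : 0 ≤ Real.sqrt (p k₀) := ht_pos.le
    have hp_zero : ∀ k, k₀ < k → p k = 0 := by
      intro k hk
      by_contra h
      have : 0 < p k := lt_of_le_of_ne (hp k) (Ne.symm h)
      exact absurd (hsupp k this) (by omega)
    -- S₀ and S₁
    have hS₀s : Summable (fun k : ℕ => if k < k₀ then p k else (0:ℝ)) := by
      apply hp_sum.of_nonneg_of_le
      · intro k; split_ifs; exacts [hp k, le_rfl]
      · intro k; split_ifs; exacts [le_rfl, hp k]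
    have hS₁s : Summable (fun k : ℕ => if k < k₀ then (k : ℝ) * p k else (0:ℝ)) := by
      apply hkp_sum.of_nonneg_of_le
      · intro k; split_ifs
        exacts [mul_nonneg (Nat.cast_nonneg k) (hp k), le_rfl]
      · intro k; split_ifs
        exacts [le_rfl, mul_nonneg (Nat.cast_nonneg k) (hp k)]
    have hS₀1 : (∑' k : ℕ, if k < k₀ then p k else (0:ℝ)) + p k₀ = 1 := by
      have hsplit : ∀ k : ℕ, p k =
          (if k < k₀ then p k else 0) + (if k = k₀ then p k₀ else 0) := by
        intro k
        rcases lt_trichotomy k k₀ with h | h | h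
        · simp [h, Nat.ne_of_lt h]
        · subst h; simp
        · have h1 : ¬ k < k₀ := by omega
          have h2 : k ≠ k₀ := by omega
          simp [h1, h2, hp_zero k h]
      rw [← hp1, tsum_congr hsplit,
        Summable.tsum_add hS₀s ⟨_, hasSum_ite_eq k₀ _⟩, tsum_ite_eq]
    have hS₁d : (∑' k : ℕ, if k < k₀ then (k : ℝ) * p k else (0:ℝ)) + (k₀ : ℝ) * p k₀ = d := by
      have hsplit : ∀ k : ℕ, (k : ℝ) * p k =
          (if k < k₀ then (k : ℝ) * p k else 0) + (if k = k₀ then (k₀ : ℝ) * p k₀ else 0) := by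
        intro k
        rcases lt_trichotomy k k₀ with h | h | h
        · simp [h, Nat.ne_of_lt h]
        · subst h; simp
        · have h1 : ¬ k < k₀ := by omega
          have h2 : k ≠ k₀ := by omega
          simp [h1, h2, hp_zero k h]
      rw [← hpd, tsum_congr hsplit,
        Summable.tsum_add hS₁s ⟨_, hasSum_ite_eq k₀ _⟩, tsum_ite_eq]
    have hS₀nn : 0 ≤ ∑' k : ℕ, (if k < k₀ then p k else (0:ℝ)) :=
      tsum_nonneg fun k => by split_ifs; exacts [hp k, le_rfl]
    have hS₁nn : 0 ≤ ∑' k : ℕ, (if k < k₀ then (k : ℝ) * p k else (0:ℝ)) :=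
      tsum_nonneg fun k => by
        split_ifs
        exacts [mul_nonneg (Nat.cast_nonneg k) (hp k), le_rfl]
    have hW : Z = (1 - ε/10) * (∑' k : ℕ, if k < k₀ then p k else (0:ℝ)) + Real.sqrt (p k₀) := by
      rw [hZ]
      congr 1
      rw [← tsum_mul_left]
      exact tsum_congr fun k => by split_ifs <;> simp
    -- rewrite goal
    have hgoal_eq : ∑' k : ℕ, (k : ℝ) * q k =
        (∑' k : ℕ, (k : ℝ) * (if k < k₀ then (1 - ε/10) * p k
          else if k = k₀ then Real.sqrt (p k₀) else 0)) / Z := by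
      rw [← tsum_div_const]
      exact tsum_congr fun k => by rw [hq k, mul_div_assoc]
    have h_k_f2 : ∀ k : ℕ, (k : ℝ) * (if k < k₀ then (1 - ε/10) * p k
          else if k = k₀ then Real.sqrt (p k₀) else 0) =
        (if k < k₀ then (1 - ε/10) * ((k : ℝ) * p k) else 0) +
          (if k = k₀ then (k₀ : ℝ) * Real.sqrt (p k₀) else 0) := by
      intro k
      rcases lt_trichotomy k k₀ with h | h | h
      · have h2 : k ≠ k₀ := Nat.ne_of_lt h
        simp only [if_pos h, if_neg h2, add_zero]
        ring
      · subst h; simp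
      · have h1 : ¬ k < k₀ := by omega
        have h2 : k ≠ k₀ := by omega
        simp [h1, h2]
    have hN₂ : (∑' k : ℕ, (k : ℝ) * (if k < k₀ then (1 - ε/10) * p k
          else if k = k₀ then Real.sqrt (p k₀) else 0)) =
        (1 - ε/10) * (∑' k : ℕ, if k < k₀ then (k : ℝ) * p k else (0:ℝ)) +
          (k₀ : ℝ) * Real.sqrt (p k₀) := by
      rw [tsum_congr h_k_f2,
        Summable.tsum_add (by
          apply (hkp_sum.mul_left (1 - ε/10)).of_nonneg_of_le
          · intro k; split_ifs
            · exact mul_nonneg hδ.le (mul_nonneg (Nat.cast_nonneg k) (hp k))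
            · exact le_rfl
          · intro k; split_ifs
            · exact le_rfl
            · exact mul_nonneg hδ.le (mul_nonneg (Nat.cast_nonneg k) (hp k)))
          ⟨_, hasSum_ite_eq k₀ _⟩, tsum_ite_eq]
      congr 1
      rw [← tsum_mul_left]
      exact tsum_congr fun k => by split_ifs <;> simp
    rw [hgoal_eq, hN₂, hW]
    by_cases hA : (k₀ : ℝ) ≤ (1 + ε/10) * d
    · -- subcase A : small k₀
      have hS₁k₀ : (∑' k : ℕ, if k < k₀ then (k : ℝ) * p k else (0:ℝ)) ≤
          (k₀ : ℝ) * (∑' k : ℕ, if k < k₀ then p k else (0:ℝ)) := by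
        rw [← tsum_mul_left]
        apply hS₁s.tsum_le_tsum _ (hS₀s.mul_left _)
        intro k
        by_cases h : k < k₀
        · simp only [if_pos h]
          have hk : (k : ℝ) ≤ (k₀ : ℝ) := by exact_mod_cast h.le
          exact mul_le_mul_of_nonneg_right hk (hp k)
        · simp [h]
      exact case2A_arith ε d _ _ _ _ hε0 hε1 hd_pos hS₀nn ht_pos
        (Nat.cast_nonneg k₀) hS₁k₀ hA
    · -- subcase B : large k₀
      push_neg at hA
      -- concentration bound on p k₀
      have hconc_s : Summable (fun k : ℕ => if (1 + ε/10) * d ≤ (k : ℝ) then p k else 0) := by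
        apply hp_sum.of_nonneg_of_le
        · intro k; split_ifs; exacts [hp k, le_rfl]
        · intro k; split_ifs; exacts [le_rfl, hp k]
      have hpk₀_le : p k₀ ≤ Real.exp (-(cε * d)) := by
        have h1 := Summable.le_tsum hconc_s k₀ (fun j _ => by split_ifs; exacts [hp j, le_rfl])
        rw [if_pos hA.le] at h1
        exact le_trans h1 hconc
      have ht_le : Real.sqrt (p k₀) ≤ Real.exp (-(cε * d) / 2) := by
        rw [← aux_sqrt_exp]
        exact Real.sqrt_le_sqrt hpk₀_le
      -- bound k₀ * sqrt(p k₀) ≤ A / d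
      have hk₀t : (k₀ : ℝ) * Real.sqrt (p k₀) ≤ (32/cε^2 + 32/c₁^2) / d := by
        rw [le_div_iff₀ hd_pos]
        have h32a : (0:ℝ) ≤ 32/c₁^2 := by positivity
        have h32b : (0:ℝ) ≤ 32/cε^2 := by positivity
        by_cases hB2 : (k₀ : ℝ) ≤ 2 * d
        · -- moderate k₀: use concentration
          have e1 : Real.exp (-(cε * d) / 2) =
              Real.exp (-(cε/4 * d)) * Real.exp (-(cε/4 * d)) := by
            rw [← Real.exp_add]; congr 1; ring
          have e2 : d * Real.exp (-(cε/4 * d)) ≤ 4/cε := by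
            have h := aux_mul_exp (cε/4) d (by positivity) hd_pos.le
            rw [one_div_div] at h; exact h
          have hb := aux_B1 (k₀ : ℝ) (Real.sqrt (p k₀)) d (Real.exp (-(cε/4 * d))) cε
            hcε hd_pos ht0 (Nat.cast_nonneg _) hB2
            (by rw [← e1]; exact ht_le) (Real.exp_pos _).le e2
          linarith
        · -- very large k₀: use the exponential tail
          push_neg at hB2
          have ha1 : (1:ℝ) ≤ (k₀ : ℝ)/d - 1 := by
            have h2 : (2:ℝ) ≤ (k₀ : ℝ)/d := by
              rw [le_div_iff₀ hd_pos]; linarith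
            linarith
          have h1a : (1 + ((k₀ : ℝ)/d - 1)) * d = (k₀ : ℝ) := by
            field_simp
            ring
          have htail_s : Summable (fun k : ℕ =>
              if (1 + ((k₀ : ℝ)/d - 1)) * d ≤ (k : ℝ) then p k else 0) := by
            apply hp_sum.of_nonneg_of_le
            · intro k; split_ifs; exacts [hp k, le_rfl]
            · intro k; split_ifs; exacts [le_rfl, hp k]
          have hpk₀2 : p k₀ ≤ Real.exp (-(c₁ * ((k₀ : ℝ)/d - 1) * d)) := by
            have h1 := Summable.le_tsum htail_s k₀ (fun j _ => by split_ifs; exacts [hp j, le_rfl])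
            rw [if_pos h1a.le] at h1
            exact le_trans h1 (htail _ ha1)
          have had : c₁ * ((k₀ : ℝ)/d - 1) * d = c₁ * ((k₀ : ℝ) - d) := by
            field_simp
          have ht2 : Real.sqrt (p k₀) ≤ Real.exp (-(c₁ * ((k₀ : ℝ) - d)) / 2) := by
            rw [← aux_sqrt_exp]
            apply Real.sqrt_le_sqrt
            rw [← had]
            exact hpk₀2
          have hcd : 0 ≤ c₁ * ((k₀ : ℝ) - 2*d) := mul_nonneg hc₁.le (by linarith)
          have ht3 : Real.sqrt (p k₀) ≤
              Real.exp (-(c₁/8 * (k₀ : ℝ))) * Real.exp (-(c₁/8 * (k₀ : ℝ))) := by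
            rw [← Real.exp_add]
            apply le_trans ht2
            apply Real.exp_le_exp.2
            nlinarith [hcd]
          have e4 : (k₀ : ℝ) * Real.exp (-(c₁/8 * (k₀ : ℝ))) ≤ 8/c₁ := by
            have h := aux_mul_exp (c₁/8) (k₀ : ℝ) (by positivity) (Nat.cast_nonneg _)
            rw [one_div_div] at h; exact h
          have e5 : Real.exp (-(c₁/8 * (k₀ : ℝ))) ≤ Real.exp (-(c₁/4 * d)) := by
            apply Real.exp_le_exp.2
            nlinarith [hcd]
          have e6 : d * Real.exp (-(c₁/4 * d)) ≤ 4/c₁ := by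
            have h := aux_mul_exp (c₁/4) d (by positivity) hd_pos.le
            rw [one_div_div] at h; exact h
          have hb := aux_B2 (k₀ : ℝ) (Real.sqrt (p k₀)) d
            (Real.exp (-(c₁/8 * (k₀ : ℝ)))) (Real.exp (-(c₁/4 * d))) c₁
            hc₁ hd_pos.le ht0 (Nat.cast_nonneg _) ht3 (Real.exp_pos _).le e4 e5
            (Real.exp_pos _).le e6
          linarith
      -- assemble subcase B
      have hu : p k₀ ≤ 1/(cε*d) := le_trans hpk₀_le (aux_exp_le cε d hcε hd_pos)
      have hcεd : (40:ℝ) ≤ cε * d := by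
        have h4 : 4/cε ≤ ε*d/10 := by linarith [hApos]
        have h5 : (4:ℝ) ≤ ε*d/10 * cε := (div_le_iff₀ hcε).mp h4
        have h6 : 0 ≤ (1-ε)*cε*d := mul_nonneg (mul_nonneg h1ε.le hcε.le) hd_pos.le
        nlinarith [h5, h6]
      have hS₀val : (∑' k : ℕ, if k < k₀ then p k else (0:ℝ)) = 1 - p k₀ := by
        linarith [hS₀1]
      have hS₁le : (∑' k : ℕ, if k < k₀ then (k : ℝ) * p k else (0:ℝ)) ≤ d := by
        have h7 : 0 ≤ (k₀ : ℝ) * p k₀ := mul_nonneg (Nat.cast_nonneg _) (hp k₀)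
        linarith [hS₁d]
      exact case2B_arith ε cε d _ _ _ _ _ (p k₀) hε0 hε1 hcε hd1 hS₁nn hS₁le
        hS₀val hu (hp k₀) ht0 (mul_nonneg (Nat.cast_nonneg _) ht0) hk₀t hApos hcεd hAd
end
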